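/- Let M be a compact metric space, f : M → M a homeomorphism, Λ ⊆ M an f-invariant set, d a positive integer, E = EuclideanSpace ℝ (Fin d), and A : M → (E ≃L[ℝ] E) a continuous map. Suppose (E¹⁻, E¹⁺) and (E²⁻, E²⁺) are both dominated splittings for the cocycle A over Λ, and that dim E¹⁻(x) = dim E²⁻(x) for all x ∈ Λ. Then E¹⁻(x) = E²⁻(x) and E¹⁺(x) = E²⁺(x) for every x ∈ Λ. -/

import Mathlib

/-- `eqCocycle f A n x = A(f^{n-1} x) ∘ ⋯ ∘ A(f x) ∘ A(x)`. -/
noncomputable def eqCocycle {M : Type*} {E : Type*} [NormedAddCommGroup E]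
    [NormedSpace ℝ E] (f : M → M) (A : M → (E ≃L[ℝ] E)) : ℕ → M → (E ≃L[ℝ] E)
  | 0, _ => ContinuousLinearEquiv.refl ℝ E
  | n + 1, x => (eqCocycle f A n x).trans (A (f^[n] x))

/-- `(E⁻, E⁺)` is a dominated splitting with constants `K, lam` for the cocycle
generated by `A` over the `f`-invariant set `Λ`: at each point of `Λ` the two
subspaces are complementary (`E⁻(x) ⊕ E⁺(x) = E`), they are invariant under the
cocycle, `K > 0`, `lam > 0`, and for all `n ≥ 0`, `x ∈ Λ` and unit vectors
`u ∈ E⁻(x)`, `w ∈ E⁺(x)` one has `‖A⁽ⁿ⁾(x) u‖ ≤ K e^{-lam n} ‖A⁽ⁿ⁾(x) w‖`. -/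
def IsDominatedSplitting {M : Type*} {E : Type*} [NormedAddCommGroup E]
    [NormedSpace ℝ E] (f : M → M) (A : M → (E ≃L[ℝ] E)) (Λ : Set M)
    (Em Ep : M → Submodule ℝ E) (K lam : ℝ) : Prop :=
  (∀ x ∈ Λ, IsCompl (Em x) (Ep x)) ∧
  (∀ x ∈ Λ, (Em x).map (A x).toLinearEquiv.toLinearMap = Em (f x)) ∧
  (∀ x ∈ Λ, (Ep x).map (A x).toLinearEquiv.toLinearMap = Ep (f x)) ∧
  0 < K ∧ 0 < lam ∧
  ∀ n : ℕ, ∀ x ∈ Λ, ∀ u ∈ Em x, ∀ w ∈ Ep x, ‖u‖ = 1 → ‖w‖ = 1 →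
    ‖eqCocycle f A n x u‖ ≤ K * Real.exp (-lam * n) * ‖eqCocycle f A n x w‖

section Aux

open Module Submodule Filter

variable {E : Type*} [NormedAddCommGroup E] [NormedSpace ℝ E]

/-- From the unit-vector domination inequality, deduce the scaled version. -/
lemma dom_scaled (T : E ≃L[ℝ] E) (Fm Fp : Submodule ℝ E) {c : ℝ} (hc : 0 ≤ c)
    (h : ∀ u ∈ Fm, ∀ w ∈ Fp, ‖u‖ = 1 → ‖w‖ = 1 → ‖T u‖ ≤ c * ‖T w‖) :
    ∀ u ∈ Fm, ∀ w ∈ Fp, w ≠ 0 → ‖T u‖ ≤ c * (‖u‖ / ‖w‖) * ‖T w‖ := by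
  intro u hu w hw hw0
  rcases eq_or_ne u 0 with rfl | hu0
  · simp only [map_zero, norm_zero]
    positivity
  · have hun : (0:ℝ) < ‖u‖ := norm_pos_iff.2 hu0
    have hwn : (0:ℝ) < ‖w‖ := norm_pos_iff.2 hw0
    have h1 : ‖T ((‖u‖)⁻¹ • u)‖ ≤ c * ‖T ((‖w‖)⁻¹ • w)‖ := by
      refine h _ (Fm.smul_mem _ hu) _ (Fp.smul_mem _ hw) ?_ ?_
      · rw [norm_smul, norm_inv, norm_norm, inv_mul_cancel₀ hun.ne']
      · rw [norm_smul, norm_inv, norm_norm, inv_mul_cancel₀ hwn.ne']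
    rw [map_smul, map_smul, norm_smul, norm_smul, norm_inv, norm_norm, norm_inv,
      norm_norm] at h1
    have h2 := mul_le_mul_of_nonneg_left h1 hun.le
    calc ‖T u‖ = ‖u‖ * ((‖u‖)⁻¹ * ‖T u‖) := by field_simp
    _ ≤ ‖u‖ * (c * ((‖w‖)⁻¹ * ‖T w‖)) := h2
    _ = c * (‖u‖ / ‖w‖) * ‖T w‖ := by field_simp

/-- If two subspaces of the same finite rank are different, then the sum
`Em₁ + Em₂` meets a complement `Ep₂` of `Em₂` nontrivially; a nonzero vector
of this intersection decomposes as `a + b` with `a ∈ Em₁` nonzero, `b ∈ Em₂`. -/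
lemma exists_cross [FiniteDimensional ℝ E] {Em₁ Em₂ Ep₂ : Submodule ℝ E}
    (hc₂ : IsCompl Em₂ Ep₂) (hne : Em₁ ≠ Em₂)
    (hrank : finrank ℝ Em₁ = finrank ℝ Em₂) :
    ∃ z a b : E, z ≠ 0 ∧ a ≠ 0 ∧ z ∈ Ep₂ ∧ a ∈ Em₁ ∧ b ∈ Em₂ ∧ a + b = z := by
  have hlt : Em₂ < Em₁ ⊔ Em₂ := by
    refine lt_of_le_of_ne le_sup_right fun h => hne ?_
    exact Submodule.eq_of_le_of_finrank_eq (le_sup_left.trans h.ge) hrank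
  have h1 : finrank ℝ Em₂ < finrank ℝ ↥(Em₁ ⊔ Em₂) :=
    Submodule.finrank_lt_finrank_of_lt hlt
  have h3 := Submodule.finrank_sup_add_finrank_inf_eq (Em₁ ⊔ Em₂) Ep₂
  have h4 : finrank ℝ ↥((Em₁ ⊔ Em₂) ⊔ Ep₂) ≤ finrank ℝ E := Submodule.finrank_le _
  have hcompl : finrank ℝ Em₂ + finrank ℝ Ep₂ = finrank ℝ E :=
    Submodule.finrank_add_eq_of_isCompl hc₂
  have hpos : 0 < finrank ℝ ↥((Em₁ ⊔ Em₂) ⊓ Ep₂) := by omega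
  have hneb : (Em₁ ⊔ Em₂) ⊓ Ep₂ ≠ ⊥ := by
    intro h
    rw [h, finrank_bot] at hpos
    exact lt_irrefl 0 hpos
  obtain ⟨z, hz, hz0⟩ := Submodule.exists_mem_ne_zero_of_ne_bot hneb
  obtain ⟨a, ha, b, hb, hab⟩ := Submodule.mem_sup.1 hz.1
  refine ⟨z, a, b, hz0, ?_, hz.2, ha, hb, hab⟩
  intro h0
  apply hz0
  have hzm : z ∈ Em₂ := by rw [← hab, h0, zero_add]; exact hb
  exact (Submodule.disjoint_def.1 hc₂.disjoint) z hzm hz.2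

/-- Core uniqueness lemma: two "dominated" complementary pairs for the same
sequence of linear automorphisms, with stable parts of equal rank, have the
same stable part. -/
lemma core_unique [FiniteDimensional ℝ E] (T : ℕ → (E ≃L[ℝ] E))
    {Em₁ Ep₁ Em₂ Ep₂ : Submodule ℝ E}
    (hc₁ : IsCompl Em₁ Ep₁) (hc₂ : IsCompl Em₂ Ep₂)
    {K₁ l₁ K₂ l₂ : ℝ} (hK₁ : 0 < K₁) (hl₁ : 0 < l₁) (hK₂ : 0 < K₂) (hl₂ : 0 < l₂)
    (hd₁ : ∀ n : ℕ, ∀ u ∈ Em₁, ∀ w ∈ Ep₁, ‖u‖ = 1 → ‖w‖ = 1 →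
      ‖T n u‖ ≤ K₁ * Real.exp (-l₁ * n) * ‖T n w‖)
    (hd₂ : ∀ n : ℕ, ∀ u ∈ Em₂, ∀ w ∈ Ep₂, ‖u‖ = 1 → ‖w‖ = 1 →
      ‖T n u‖ ≤ K₂ * Real.exp (-l₂ * n) * ‖T n w‖)
    (hrank : finrank ℝ Em₁ = finrank ℝ Em₂) : Em₁ = Em₂ := by
  by_contra hne
  obtain ⟨z, a, b, hz0, ha0, hzP, haM, hbM, hab⟩ := exists_cross hc₂ hne hrank
  obtain ⟨z', a', b', hz'0, ha'0, hz'P, ha'M, hb'M, hab'⟩ :=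
    exists_cross hc₁ (Ne.symm hne) hrank.symm
  -- limits
  have key : ∀ (K l C : ℝ), 0 < l →
      Tendsto (fun n : ℕ => K * Real.exp (-l * n) * C) atTop (nhds 0) := by
    intro K l C hl
    have h0 : Tendsto (fun n : ℕ => Real.exp (-l * n)) atTop (nhds 0) := by
      have : (fun n : ℕ => Real.exp (-l * n)) = fun n : ℕ => (Real.exp (-l)) ^ n := by
        funext n; rw [mul_comm, Real.exp_nat_mul]
      rw [this]
      exact tendsto_pow_atTop_nhds_zero_of_lt_one (Real.exp_nonneg _)
        (Real.exp_lt_one_iff.2 (neg_neg_of_pos hl))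
    simpa using (h0.const_mul K).mul_const C
  have E1 := (key K₂ l₂ (‖b‖ / ‖z‖) hl₂).eventually_lt_const (by norm_num : (0:ℝ) < 1/2)
  have E2 := (key K₁ l₁ (‖b'‖ / ‖z'‖) hl₁).eventually_lt_const (by norm_num : (0:ℝ) < 1/2)
  have E3 : Tendsto (fun n : ℕ => (K₁ * Real.exp (-l₁ * n) * (‖a‖ / ‖z'‖)) *
      (K₂ * Real.exp (-l₂ * n) * (‖a'‖ / ‖z‖))) atTop (nhds 0) := by
    simpa using (key K₁ l₁ (‖a‖ / ‖z'‖) hl₁).mul (key K₂ l₂ (‖a'‖ / ‖z‖) hl₂)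
  have E3' := E3.eventually_lt_const (by norm_num : (0:ℝ) < 1/4)
  obtain ⟨n, h1, h2, h3⟩ := (E1.and (E2.and E3')).exists
  obtain ⟨h2, h3⟩ := (⟨h2, h3⟩ : _ ∧ _)
  -- abbreviations
  have hcpos₁ : (0:ℝ) ≤ K₁ * Real.exp (-l₁ * n) := by positivity
  have hcpos₂ : (0:ℝ) ≤ K₂ * Real.exp (-l₂ * n) := by positivity
  have sd₁ := dom_scaled (T n) Em₁ Ep₁ hcpos₁ (hd₁ n)
  have sd₂ := dom_scaled (T n) Em₂ Ep₂ hcpos₂ (hd₂ n)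
  have hTz : T n z ≠ 0 := fun h => hz0 ((T n).injective (by rw [h, map_zero]))
  have hX : (0:ℝ) < ‖T n z‖ := norm_pos_iff.2 hTz
  have hYnn : (0:ℝ) ≤ ‖T n z'‖ := norm_nonneg _
  have e1 : ‖T n b‖ ≤ K₂ * Real.exp (-l₂ * n) * (‖b‖ / ‖z‖) * ‖T n z‖ :=
    sd₂ b hbM z hzP hz0
  have e2 : ‖T n a‖ ≤ K₁ * Real.exp (-l₁ * n) * (‖a‖ / ‖z'‖) * ‖T n z'‖ :=
    sd₁ a haM z' hz'P hz'0
  have e3 : ‖T n a'‖ ≤ K₂ * Real.exp (-l₂ * n) * (‖a'‖ / ‖z‖) * ‖T n z‖ :=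
    sd₂ a' ha'M z hzP hz0
  have e4 : ‖T n b'‖ ≤ K₁ * Real.exp (-l₁ * n) * (‖b'‖ / ‖z'‖) * ‖T n z'‖ :=
    sd₁ b' hb'M z' hz'P hz'0
  have e5 : ‖T n z‖ ≤ ‖T n a‖ + ‖T n b‖ := by
    have : T n z = T n a + T n b := by rw [← hab, map_add]
    rw [this]; exact norm_add_le _ _
  have e6 : ‖T n z'‖ ≤ ‖T n a'‖ + ‖T n b'‖ := by
    have : T n z' = T n a' + T n b' := by rw [← hab', map_add]
    rw [this]; exact norm_add_le _ _
  set X := ‖T n z‖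
  set Y := ‖T n z'‖
  set α := K₂ * Real.exp (-l₂ * n) * (‖a'‖ / ‖z‖) with hα
  set β := K₁ * Real.exp (-l₁ * n) * (‖a‖ / ‖z'‖) with hβ
  have hαnn : (0:ℝ) ≤ α := by rw [hα]; positivity
  have hβnn : (0:ℝ) ≤ β := by rw [hβ]; positivity
  -- step 1 : X/2 < ‖T n a‖
  have step1 : ‖T n b‖ < (1/2) * X :=
    lt_of_le_of_lt e1 (mul_lt_mul_of_pos_right h1 hX)
  have step2 : X / 2 < ‖T n a‖ := by linarith
  -- step 3 : Y ≤ 2 α X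
  have step3a : ‖T n b'‖ ≤ (1/2) * Y :=
    le_trans e4 (mul_le_mul_of_nonneg_right h2.le hYnn)
  have step3 : Y ≤ 2 * (α * X) := by
    have := e6
    nlinarith [e3]
  -- combine
  have final1 : ‖T n a‖ ≤ β * Y := e2
  have final2 : β * Y ≤ β * (2 * (α * X)) := mul_le_mul_of_nonneg_left step3 hβnn
  nlinarith [mul_lt_mul_of_pos_right h3 hX]

end Aux

section Cocycle

open Module Submodule

variable {M : Type*} {E : Type*} [NormedAddCommGroup E] [NormedSpace ℝ E]

lemma eqCocycle_succ (f : M → M) (A : M → (E ≃L[ℝ] E)) (n : ℕ) (x : M) :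
    eqCocycle f A (n + 1) x = (eqCocycle f A n x).trans (A (f^[n] x)) := rfl

lemma eqCocycle_map (f : M → M) (A : M → (E ≃L[ℝ] E)) (Λ : Set M)
    (hΛf : ∀ y ∈ Λ, f y ∈ Λ) (Em : M → Submodule ℝ E)
    (hinv : ∀ x ∈ Λ, (Em x).map (A x).toLinearEquiv.toLinearMap = Em (f x)) :
    ∀ n : ℕ, ∀ y ∈ Λ,
      (Em y).map (eqCocycle f A n y).toLinearEquiv.toLinearMap = Em (f^[n] y) := by
  intro n
  induction n with
  | zero =>
    intro y _
    simp only [eqCocycle, Function.iterate_zero, id_eq]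
    exact Submodule.map_id _
  | succ n ih =>
    intro y hy
    have hyn : f^[n] y ∈ Λ := by
      clear ih
      induction n with
      | zero => simpa using hy
      | succ n ih => rw [Function.iterate_succ_apply']; exact hΛf _ ih
    rw [eqCocycle_succ]
    have : ((eqCocycle f A n y).trans (A (f^[n] y))).toLinearEquiv.toLinearMap =
        (A (f^[n] y)).toLinearEquiv.toLinearMap ∘ₗ
          (eqCocycle f A n y).toLinearEquiv.toLinearMap := rfl
    rw [this, Submodule.map_comp, ih y hy, hinv _ hyn, Function.iterate_succ_apply']

end Cocycle

/-- Uniqueness of dominated splittings of prescribed index: two dominated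
splittings for the same cocycle over the same invariant set, whose stable
subbundles have the same dimension at every point, coincide. -/
theorem dominated_splitting_unique
    {M : Type*} [MetricSpace M] [CompactSpace M]
    (f : M ≃ₜ M) (Λ : Set M) (hΛ : f '' Λ = Λ)
    (d : ℕ) (hd : 0 < d)
    (A : M → (EuclideanSpace ℝ (Fin d) ≃L[ℝ] EuclideanSpace ℝ (Fin d)))
    (hA : Continuous fun x => (A x : EuclideanSpace ℝ (Fin d) →L[ℝ] EuclideanSpace ℝ (Fin d)))
    (Em₁ Ep₁ Em₂ Ep₂ : M → Submodule ℝ (EuclideanSpace ℝ (Fin d)))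
    (h₁ : ∃ K lam : ℝ, IsDominatedSplitting f A Λ Em₁ Ep₁ K lam)
    (h₂ : ∃ K lam : ℝ, IsDominatedSplitting f A Λ Em₂ Ep₂ K lam)
    (hdim : ∀ x ∈ Λ, Module.finrank ℝ (Em₁ x) = Module.finrank ℝ (Em₂ x)) :
    ∀ x ∈ Λ, Em₁ x = Em₂ x ∧ Ep₁ x = Ep₂ x := by
  classical
  set E := EuclideanSpace ℝ (Fin d)
  obtain ⟨K₁, l₁, hc₁, hm₁, hp₁, hK₁, hl₁, hdom₁⟩ := h₁
  obtain ⟨K₂, l₂, hc₂, hm₂, hp₂, hK₂, hl₂, hdom₂⟩ := h₂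
  -- invariance of Λ
  have hΛf : ∀ y ∈ Λ, f y ∈ Λ := fun y hy => hΛ ▸ Set.mem_image_of_mem f hy
  have hΛg : ∀ y ∈ Λ, f.symm y ∈ Λ := by
    intro y hy
    rw [← hΛ] at hy
    obtain ⟨z, hz, rfl⟩ := hy
    simpa using hz
  have hΛgn : ∀ (n : ℕ), ∀ y ∈ Λ, (⇑f.symm)^[n] y ∈ Λ := by
    intro n
    induction n with
    | zero => intro y hy; simpa using hy
    | succ n ih =>
      intro y hy
      rw [Function.iterate_succ_apply']
      exact hΛg _ (ih y hy)
  have hfg : ∀ (n : ℕ) (x : M), f^[n] ((⇑f.symm)^[n] x) = x := by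
    intro n x
    have h : Function.LeftInverse ⇑f ⇑f.symm := f.apply_symm_apply
    exact h.iterate n x
  intro x hx
  -- Part 1 : Em₁ x = Em₂ x
  have hEm : Em₁ x = Em₂ x := by
    refine core_unique (fun n => eqCocycle f A n x) (hc₁ x hx) (hc₂ x hx)
      hK₁ hl₁ hK₂ hl₂ (fun n => hdom₁ n x hx) (fun n => hdom₂ n x hx) (hdim x hx)
  -- Part 2 : Ep₁ x = Ep₂ x, via the inverse cocycle
  -- backward domination
  have bdom : ∀ (Fm Fp : M → Submodule ℝ E) (K l : ℝ), 0 < K → 0 < l →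
      (∀ x ∈ Λ, (Fm x).map (A x).toLinearEquiv.toLinearMap = Fm (f x)) →
      (∀ x ∈ Λ, (Fp x).map (A x).toLinearEquiv.toLinearMap = Fp (f x)) →
      (∀ n : ℕ, ∀ x ∈ Λ, ∀ u ∈ Fm x, ∀ w ∈ Fp x, ‖u‖ = 1 → ‖w‖ = 1 →
        ‖eqCocycle f A n x u‖ ≤ K * Real.exp (-l * n) * ‖eqCocycle f A n x w‖) →
      ∀ n : ℕ, ∀ u ∈ Fp x, ∀ w ∈ Fm x, ‖u‖ = 1 → ‖w‖ = 1 →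
        ‖(eqCocycle f A n ((⇑f.symm)^[n] x)).symm u‖ ≤ K * Real.exp (-l * n) *
          ‖(eqCocycle f A n ((⇑f.symm)^[n] x)).symm w‖ := by
    intro Fm Fp K l hK hl hinvm hinvp hdom n u hu w hw hun hwn
    set y := (⇑f.symm)^[n] x with hy
    have hyΛ : y ∈ Λ := hΛgn n x hx
    have hyx : f^[n] y = x := hfg n x
    -- pull back u and w
    have hmapp : (Fp y).map (eqCocycle f A n y).toLinearEquiv.toLinearMap = Fp x := by
      rw [eqCocycle_map f A Λ hΛf Fp hinvp n y hyΛ, hyx]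
    have hmapm : (Fm y).map (eqCocycle f A n y).toLinearEquiv.toLinearMap = Fm x := by
      rw [eqCocycle_map f A Λ hΛf Fm hinvm n y hyΛ, hyx]
    rw [← hmapp] at hu
    rw [← hmapm] at hw
    obtain ⟨u', hu', huu⟩ := Submodule.mem_map.1 hu
    obtain ⟨w', hw', hww⟩ := Submodule.mem_map.1 hw
    have huu' : eqCocycle f A n y u' = u := huu
    have hww' : eqCocycle f A n y w' = w := hww
    have hTu : (eqCocycle f A n y).symm u = u' := by
      rw [← huu']; exact (eqCocycle f A n y).symm_apply_apply u'
    have hTw : (eqCocycle f A n y).symm w = w' := by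
      rw [← hww']; exact (eqCocycle f A n y).symm_apply_apply w'
    have hu'0 : u' ≠ 0 := by
      intro h0
      rw [h0, map_zero] at huu'
      rw [← huu'] at hun
      simp at hun
    have hu'pos : (0:ℝ) < ‖u'‖ := norm_pos_iff.2 hu'0
    have hcpos : (0:ℝ) ≤ K * Real.exp (-l * n) := by positivity
    have sd := dom_scaled (eqCocycle f A n y) (Fm y) (Fp y) hcpos
      (hdom n y hyΛ) w' hw' u' hu' hu'0
    rw [huu', hww'] at sd
    rw [hwn, hun, mul_one] at sd
    -- sd : 1 ≤ K * exp(-l n) * (‖w'‖ / ‖u'‖)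
    rw [hTu, hTw]
    rw [← mul_div_assoc, le_div_iff₀ hu'pos, one_mul] at sd
    exact sd
  have hEp : Ep₁ x = Ep₂ x := by
    have hrank : Module.finrank ℝ (Ep₁ x) = Module.finrank ℝ (Ep₂ x) := by
      have r₁ := Submodule.finrank_add_eq_of_isCompl (hc₁ x hx)
      have r₂ := Submodule.finrank_add_eq_of_isCompl (hc₂ x hx)
      have := hdim x hx
      omega
    refine core_unique (fun n => (eqCocycle f A n ((⇑f.symm)^[n] x)).symm)
      (hc₁ x hx).symm (hc₂ x hx).symm hK₁ hl₁ hK₂ hl₂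
      (bdom Em₁ Ep₁ K₁ l₁ hK₁ hl₁ hm₁ hp₁ hdom₁)
      (bdom Em₂ Ep₂ K₂ l₂ hK₂ hl₂ hm₂ hp₂ hdom₂) hrank
  exact ⟨hEm, hEp⟩
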